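/- If a graph G admits a connected minimal clique partition (non-trivial cliques inducing a connected subgraph), then the union S of the non-trivial cliques is a connected vertex cover of G of size at most twice the size of any connected vertex cover of G. -/

import Mathlib

/-- If a connected graph `G` with at least one edge admits a connected
minimal clique partition (the non-trivial cliques inducing a connected subgraph), then
the union `S` of the non-trivial cliques is a connected vertex cover of `G` of size at
most twice the size of any connected vertex cover of `G`. -/
theorem connected_clique_partition_gives_cvc {V : Type*} [Fintype V] [DecidableEq V]
    (G : SimpleGraph V) (hconn : G.Connected) (hedge : ∃ u v : V, G.Adj u v)
    (P : Finset (Finset V))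
    (hcover : ∀ v : V, ∃ C ∈ P, v ∈ C)
    (hdisj : ∀ C ∈ P, ∀ D ∈ P, C ≠ D → Disjoint C D)
    (hne : ∀ C ∈ P, C.Nonempty)
    (hclique : ∀ C ∈ P, G.IsClique ↑C)
    (hmin : ∀ C ∈ P, ∀ D ∈ P, C ≠ D → ¬ G.IsClique ↑(C ∪ D))
    (hconnected : (G.induce (↑((P.filter (fun C => 2 ≤ C.card)).biUnion id) : Set V)).Connected) :
    letI S : Finset V := (P.filter (fun C => 2 ≤ C.card)).biUnion id
    (∀ u v : V, G.Adj u v → u ∈ S ∨ v ∈ S) ∧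
    (G.induce (↑S : Set V)).Connected ∧
    (∀ T : Finset V, (∀ u v : V, G.Adj u v → u ∈ T ∨ v ∈ T) →
      (G.induce (↑T : Set V)).Connected → S.card ≤ 2 * T.card) := by
  set S : Finset V := (P.filter (fun C => 2 ≤ C.card)).biUnion id with hS
  have hScover : ∀ u v : V, G.Adj u v → u ∈ S ∨ v ∈ S := by
    intro u v huv
    by_contra h
    push_neg at h
    obtain ⟨hu, hv⟩ := h
    obtain ⟨C, hC, huC⟩ := hcover u
    obtain ⟨D, hD, hvD⟩ := hcover v
    have hCs : C = {u} := by
      have h1 : C.card ≤ 1 := by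
        by_contra h2
        exact hu (Finset.mem_biUnion.mpr ⟨C, Finset.mem_filter.mpr ⟨hC, by omega⟩, huC⟩)
      have := Finset.card_le_one.mp h1
      apply Finset.eq_singleton_iff_unique_mem.mpr ⟨huC, fun x hx => this x hx u huC⟩
    have hDs : D = {v} := by
      have h1 : D.card ≤ 1 := by
        by_contra h2
        exact hv (Finset.mem_biUnion.mpr ⟨D, Finset.mem_filter.mpr ⟨hD, by omega⟩, hvD⟩)
      have := Finset.card_le_one.mp h1
      apply Finset.eq_singleton_iff_unique_mem.mpr ⟨hvD, fun x hx => this x hx v hvD⟩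
    have hne' : C ≠ D := by
      rw [hCs, hDs]
      simp [Finset.singleton_injective.ne_iff, G.ne_of_adj huv]
    apply hmin C hC D hD hne'
    rw [hCs, hDs]
    intro x hx y hy hxy
    simp only [Finset.coe_union, Finset.coe_singleton, Set.mem_union, Set.mem_singleton_iff] at hx hy
    rcases hx with rfl | rfl <;> rcases hy with rfl | rfl <;>
      first | exact absurd rfl hxy | exact huv | exact huv.symm
  refine ⟨hScover, hconnected, ?_⟩
  intro T hT _
  set F := P.filter (fun C => 2 ≤ C.card) with hF
  have hdisjF : ∀ C ∈ F, ∀ D ∈ F, C ≠ D → Disjoint C D := by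
    intro C hC D hD h
    exact hdisj C (Finset.mem_filter.mp hC).1 D (Finset.mem_filter.mp hD).1 h
  have hScard : S.card = ∑ C ∈ F, C.card := by
    apply Finset.card_biUnion
    intro C hC D hD h
    exact hdisjF C hC D hD h
  have hkey : ∀ C ∈ F, C.card ≤ 2 * (C ∩ T).card := by
    intro C hC
    obtain ⟨hCP, hC2⟩ := Finset.mem_filter.mp hC
    have hsd : (C \ T).card ≤ 1 := by
      rw [Finset.card_le_one]
      intro a ha b hb
      by_contra hab
      have hadj : G.Adj a b := hclique C hCP (Finset.mem_sdiff.mp ha).1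
        (Finset.mem_sdiff.mp hb).1 hab
      rcases hT a b hadj with h | h
      · exact (Finset.mem_sdiff.mp ha).2 h
      · exact (Finset.mem_sdiff.mp hb).2 h
    have hsplit : (C ∩ T).card + (C \ T).card = C.card :=
      Finset.card_inter_add_card_sdiff C T
    omega
  calc S.card = ∑ C ∈ F, C.card := hScard
    _ ≤ ∑ C ∈ F, 2 * (C ∩ T).card := Finset.sum_le_sum hkey
    _ = 2 * ∑ C ∈ F, (C ∩ T).card := by rw [Finset.mul_sum]
    _ = 2 * (F.biUnion (fun C => C ∩ T)).card := by
        rw [Finset.card_biUnion]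
        intro C hC D hD h
        exact Finset.disjoint_of_subset_left Finset.inter_subset_left
          (Finset.disjoint_of_subset_right Finset.inter_subset_left (hdisjF C hC D hD h))
    _ ≤ 2 * T.card := by
        apply Nat.mul_le_mul_left
        apply Finset.card_le_card
        intro x hx
        obtain ⟨C, _, hxC⟩ := Finset.mem_biUnion.mp hx
        exact (Finset.mem_inter.mp hxC).2
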